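/- For λ ≥ δ > 0, α ∈ (0,1), M ∈ ℕ, η = M^{-1/2}, and nodes s_m = mη for m = −M,…,M, define the quadrature approximation Q_M(λ) = 2η (sin(πα)/π) Σ_{m=−M}^{M} e^{2α s_m} (1 + e^{2 s_m} λ)^{-1}. Then 0 < Q_M(λ), and Q_M(λ) is a Riemann-sum approximation of λ^{-α} = 2(sin(πα)/π) ∫_{−∞}^{∞} e^{2αs}(1+e^{2s}λ)^{-1} ds in the sense that |Q_M(λ) − λ^{-α}| → 0 as M → ∞. -/

import Mathlib

open Real Filter

/-- The sinc/rectangle quadrature approximation of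
`λ^(-α) = 2 (sin(πα)/π) ∫_ℝ e^{2αs}(1+e^{2s}λ)^{-1} ds`
with step `η = M^{-1/2}` and nodes `s_m = mη`, `m = -M, …, M`. -/
noncomputable def sincQuad (α lam : ℝ) (M : ℕ) : ℝ :=
  2 * ((M : ℝ) ^ (-(1 / 2 : ℝ))) * (Real.sin (Real.pi * α) / Real.pi) *
    ∑ m ∈ Finset.Icc (-(M : ℤ)) M,
      Real.exp (2 * α * ((m : ℝ) * (M : ℝ) ^ (-(1 / 2 : ℝ)))) *
        (1 + Real.exp (2 * ((m : ℝ) * (M : ℝ) ^ (-(1 / 2 : ℝ)))) * lam)⁻¹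

open MeasureTheory Set

noncomputable def qF (α lam : ℝ) (s : ℝ) : ℝ :=
  Real.exp (2 * α * s) * (1 + Real.exp (2 * s) * lam)⁻¹

noncomputable def qD (α lam : ℝ) (s : ℝ) : ℝ :=
  2 * α * qF α lam s -
    Real.exp (2 * α * s) * (2 * Real.exp (2 * s) * lam) / (1 + Real.exp (2 * s) * lam) ^ 2

variable {lam α : ℝ}

lemma h_pos (hlam : 0 < lam) (s : ℝ) : 0 < 1 + Real.exp (2 * s) * lam := by
  positivity

lemma qF_pos (hlam : 0 < lam) (s : ℝ) : 0 < qF α lam s := by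
  unfold qF
  positivity

lemma hasDerivAt_qF (hlam : 0 < lam) (s : ℝ) :
    HasDerivAt (qF α lam) (qD α lam s) s := by
  have hg : HasDerivAt (fun s => Real.exp (2 * α * s)) (2 * α * Real.exp (2 * α * s)) s := by
    simpa [mul_comm] using ((hasDerivAt_id s).const_mul (2 * α)).exp
  have hh : HasDerivAt (fun s => 1 + Real.exp (2 * s) * lam) (2 * Real.exp (2 * s) * lam) s := by
    have : HasDerivAt (fun s => Real.exp (2 * s)) (2 * Real.exp (2 * s)) s := by
      simpa [mul_comm] using ((hasDerivAt_id s).const_mul (2 : ℝ)).exp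
    simpa [mul_comm, mul_assoc] using ((this.mul_const lam).const_add 1)
  have := hg.mul (hh.inv (h_pos hlam s).ne')
  refine this.congr_deriv ?_
  unfold qD qF
  simp only [Pi.inv_apply]
  field_simp
  ring

lemma abs_qD_le (hlam : 0 < lam) (hα0 : 0 < α) (hα1 : α < 1) (s : ℝ) :
    |qD α lam s| ≤ 4 * qF α lam s := by
  have hh := h_pos hlam s
  have h1 : 0 ≤ 2 * α * qF α lam s := by
    have := (qF_pos hlam s (α := α)).le
    positivity
  have h2 : 0 ≤ Real.exp (2 * α * s) * (2 * Real.exp (2 * s) * lam) /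
      (1 + Real.exp (2 * s) * lam) ^ 2 := by positivity
  have e1 : 2 * α * qF α lam s ≤ 2 * qF α lam s := by
    have := (qF_pos hlam s (α := α)).le
    nlinarith
  have e2 : Real.exp (2 * α * s) * (2 * Real.exp (2 * s) * lam) /
      (1 + Real.exp (2 * s) * lam) ^ 2 ≤ 2 * qF α lam s := by
    rw [div_le_iff₀ (by positivity)]
    unfold qF
    have hle : Real.exp (2 * s) * lam ≤ 1 + Real.exp (2 * s) * lam := by linarith
    have hexp : 0 < Real.exp (2 * α * s) := Real.exp_pos _
    have : 2 * (Real.exp (2 * α * s) * (1 + Real.exp (2 * s) * lam)⁻¹) *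
        (1 + Real.exp (2 * s) * lam) ^ 2 = 2 * Real.exp (2 * α * s) *
        (1 + Real.exp (2 * s) * lam) := by
      field_simp
    rw [this]
    nlinarith
  unfold qD
  rw [abs_le]
  constructor <;> nlinarith

lemma continuous_qF (hlam : 0 < lam) : Continuous (qF α lam) := by
  unfold qF
  exact (Real.continuous_exp.comp (continuous_const.mul continuous_id)).mul
    ((continuous_const.add ((Real.continuous_exp.comp
      (continuous_const.mul continuous_id)).mul continuous_const)).inv₀
      fun s => (h_pos hlam s).ne')

noncomputable def qG (α lam : ℝ) (t : ℝ) : ℝ := t ^ (α - 1) * (1 + t * lam)⁻¹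

lemma qG_integrableOn (hlam : 0 < lam) (hα0 : 0 < α) (hα1 : α < 1) :
    IntegrableOn (qG α lam) (Ioi 0) := by
  have hcont : ContinuousOn (qG α lam) (Ioi 0) := by
    apply ContinuousOn.mul
    · exact fun t ht => (Real.continuousAt_rpow_const t _ (Or.inl (ne_of_gt ht))).continuousWithinAt
    · apply ContinuousOn.inv₀
      · fun_prop
      · intro t ht
        have : (0:ℝ) < t := ht
        positivity
  have h1 : IntegrableOn (qG α lam) (Ioc 0 1) := by
    have hint : IntegrableOn (fun t : ℝ => t ^ (α - 1)) (Ioc 0 1) := by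
      have := intervalIntegral.intervalIntegrable_rpow' (a := 0) (b := 1)
        (r := α - 1) (by linarith)
      simpa [intervalIntegrable_iff, uIoc_of_le (zero_le_one (α := ℝ))] using this
    refine Integrable.mono hint ((hcont.mono Ioc_subset_Ioi_self).aestronglyMeasurable
      measurableSet_Ioc) ?_
    filter_upwards [ae_restrict_mem measurableSet_Ioc] with t ht
    have ht0 : (0:ℝ) < t := ht.1
    have hd : (0:ℝ) < 1 + t * lam := by positivity
    rw [Real.norm_eq_abs, Real.norm_eq_abs,
      abs_of_nonneg (show (0:ℝ) ≤ qG α lam t by unfold qG; positivity),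
      abs_of_nonneg (by positivity : (0:ℝ) ≤ t ^ (α - 1))]
    unfold qG
    have : (1 + t * lam)⁻¹ ≤ 1 := by
      rw [inv_le_one_iff₀]; right; nlinarith
    nlinarith [Real.rpow_pos_of_pos ht0 (α - 1)]
  have h2 : IntegrableOn (qG α lam) (Ioi 1) := by
    have hint : IntegrableOn (fun t : ℝ => lam⁻¹ * t ^ (α - 2)) (Ioi 1) :=
      (integrableOn_Ioi_rpow_of_lt (by linarith) one_pos).const_mul _
    refine Integrable.mono hint ((hcont.mono (Ioi_subset_Ioi zero_le_one)).aestronglyMeasurable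
      measurableSet_Ioi) ?_
    filter_upwards [ae_restrict_mem measurableSet_Ioi] with t ht
    have ht0 : (0:ℝ) < t := lt_trans one_pos ht
    have hd : (0:ℝ) < 1 + t * lam := by positivity
    rw [Real.norm_eq_abs, Real.norm_eq_abs,
      abs_of_nonneg (show (0:ℝ) ≤ qG α lam t by unfold qG; positivity),
      abs_of_nonneg (by positivity : (0:ℝ) ≤ lam⁻¹ * t ^ (α - 2))]
    unfold qG
    have key : (1 + t * lam)⁻¹ ≤ (t * lam)⁻¹ := by
      apply inv_anti₀ (by positivity)
      linarith
    have h3 : t ^ (α - 1) * (1 + t * lam)⁻¹ ≤ t ^ (α - 1) * (t * lam)⁻¹ := by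
      have : (0:ℝ) ≤ t ^ (α - 1) := by positivity
      nlinarith [inv_pos.mpr (show (0:ℝ) < t * lam by positivity)]
    refine h3.trans (le_of_eq ?_)
    rw [mul_inv, show α - 1 = (α - 2) + 1 by ring, Real.rpow_add ht0, Real.rpow_one]
    field_simp
  have : Ioi (0:ℝ) = Ioc 0 1 ∪ Ioi 1 := (Ioc_union_Ioi_eq_Ioi zero_le_one).symm
  rw [this]
  exact h1.union h2

lemma image_exp2 : (fun s : ℝ => Real.exp (2 * s)) '' Set.univ = Ioi 0 := by
  rw [image_univ]
  ext y
  constructor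
  · rintro ⟨s, rfl⟩; exact Real.exp_pos _
  · intro hy
    refine ⟨Real.log y / 2, ?_⟩
    show Real.exp (2 * (Real.log y / 2)) = y
    rw [show 2 * (Real.log y / 2) = Real.log y by ring, Real.exp_log hy]

lemma smul_qG_eq (hα0 : 0 < α) (s : ℝ) :
    |2 * Real.exp (2 * s)| • qG α lam (Real.exp (2 * s)) = 2 * qF α lam s := by
  rw [abs_of_pos (by positivity), smul_eq_mul]
  unfold qG qF
  rw [← Real.exp_mul, show (2:ℝ) * α * s = 2 * s + 2 * s * (α - 1) by ring, Real.exp_add]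
  ring

lemma cov_exp (hlam : 0 < lam) (hα0 : 0 < α) :
    (∫ t in Ioi (0:ℝ), qG α lam t) = ∫ s : ℝ, 2 * qF α lam s := by
  have hderiv : ∀ x ∈ (Set.univ : Set ℝ), HasDerivWithinAt (fun s : ℝ => Real.exp (2 * s))
      (2 * Real.exp (2 * x)) Set.univ x := by
    intro x _
    exact (by simpa [mul_comm] using ((hasDerivAt_id x).const_mul (2:ℝ)).exp :
      HasDerivAt (fun s : ℝ => Real.exp (2 * s)) (2 * Real.exp (2 * x)) x).hasDerivWithinAt
  have hinj : InjOn (fun s : ℝ => Real.exp (2 * s)) Set.univ := by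
    intro x _ y _ h
    have := Real.exp_injective h
    linarith
  have := integral_image_eq_integral_abs_deriv_smul MeasurableSet.univ hderiv hinj (qG α lam)
  rw [image_exp2] at this
  rw [this]
  simp only [Measure.restrict_univ]
  exact integral_congr_ae (Filter.Eventually.of_forall fun s => smul_qG_eq hα0 s)

lemma qF_integrable (hlam : 0 < lam) (hα0 : 0 < α) (hα1 : α < 1) :
    Integrable (qF α lam) := by
  have hderiv : ∀ x ∈ (Set.univ : Set ℝ), HasDerivWithinAt (fun s : ℝ => Real.exp (2 * s))
      (2 * Real.exp (2 * x)) Set.univ x := by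
    intro x _
    exact (by simpa [mul_comm] using ((hasDerivAt_id x).const_mul (2:ℝ)).exp :
      HasDerivAt (fun s : ℝ => Real.exp (2 * s)) (2 * Real.exp (2 * x)) x).hasDerivWithinAt
  have hinj : InjOn (fun s : ℝ => Real.exp (2 * s)) Set.univ := by
    intro x _ y _ h
    have := Real.exp_injective h
    linarith
  have := (integrableOn_image_iff_integrableOn_abs_deriv_smul MeasurableSet.univ hderiv hinj
    (qG α lam)).mp (by rw [image_exp2]; exact qG_integrableOn hlam hα0 hα1)
  rw [integrableOn_univ] at this
  have h2 : Integrable (fun s : ℝ => 2 * qF α lam s) := by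
    refine this.congr (Filter.Eventually.of_forall fun s => smul_qG_eq hα0 s)
  simpa using h2.const_mul (1/2 : ℝ)

lemma beta_real (hα0 : 0 < α) (hα1 : α < 1) :
    (∫ u in Ioo (0:ℝ) 1, u ^ (α - 1) * (1 - u) ^ (-α)) = π / Real.sin (π * α) := by
  have hres : (0:ℝ) < Complex.re (α : ℂ) := by simpa using hα0
  have hret : (0:ℝ) < Complex.re (1 - (α:ℂ)) := by
    simp only [Complex.sub_re, Complex.one_re, Complex.ofReal_re]
    linarith
  have h1 : Complex.Gamma (α:ℂ) * Complex.Gamma (1 - α) =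
      Complex.Gamma ((α:ℂ) + (1 - α)) * Complex.betaIntegral α (1 - α) :=
    Complex.Gamma_mul_Gamma_eq_betaIntegral hres hret
  rw [show (α:ℂ) + (1 - α) = 1 by ring, Complex.Gamma_one, one_mul,
    Complex.Gamma_mul_Gamma_one_sub] at h1
  -- h1 : π / sin (π α) = betaIntegral
  have h2 : Complex.betaIntegral α (1 - α) =
      ((∫ u in (0:ℝ)..1, u ^ (α - 1) * (1 - u) ^ (-α) : ℝ) : ℂ) := by
    rw [Complex.betaIntegral]
    rw [← intervalIntegral.integral_ofReal]
    apply intervalIntegral.integral_congr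
    intro x hx
    rw [uIcc_of_le (zero_le_one (α := ℝ))] at hx
    have hx0 : (0:ℝ) ≤ x := hx.1
    have hx1 : (0:ℝ) ≤ 1 - x := by linarith [hx.2]
    push_cast
    rw [Complex.ofReal_cpow hx0, Complex.ofReal_cpow hx1]
    push_cast
    ring_nf
  have h3 : ((π / Real.sin (π * α) : ℝ) : ℂ) =
      ((∫ u in (0:ℝ)..1, u ^ (α - 1) * (1 - u) ^ (-α) : ℝ) : ℂ) := by
    rw [← h2, ← h1]
    push_cast [Complex.ofReal_sin]
    norm_num
  have h4 := Complex.ofReal_injective h3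
  rw [intervalIntegral.integral_of_le (zero_le_one (α := ℝ)),
    MeasureTheory.integral_Ioc_eq_integral_Ioo] at h4
  exact h4.symm

lemma image_mobius : (fun u : ℝ => u / (1 - u)) '' Ioo 0 1 = Ioi 0 := by
  ext y
  constructor
  · rintro ⟨u, hu, rfl⟩
    exact div_pos hu.1 (by linarith [hu.2])
  · intro hy
    have hy0 : (0:ℝ) < y := hy
    refine ⟨y / (1 + y), ⟨by positivity, ?_⟩, ?_⟩
    · rw [div_lt_one (by positivity)]; linarith
    · show y / (1 + y) / (1 - y / (1 + y)) = y
      have h1 : 1 - y / (1 + y) = 1 / (1 + y) := by field_simp; ring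
      rw [h1]
      field_simp

lemma J_eq (hα0 : 0 < α) (hα1 : α < 1) :
    (∫ t in Ioi (0:ℝ), qG α 1 t) = π / Real.sin (π * α) := by
  have hderiv : ∀ u ∈ Ioo (0:ℝ) 1, HasDerivWithinAt (fun u : ℝ => u / (1 - u))
      (((1 - u) ^ 2)⁻¹) (Ioo 0 1) u := by
    intro u hu
    have h1u : (1:ℝ) - u ≠ 0 := by intro h; linarith [hu.2]
    have : HasDerivAt (fun u : ℝ => u / (1 - u))
        ((1 * (1 - u) - u * (-1)) / (1 - u) ^ 2) u :=
      (hasDerivAt_id u).div ((hasDerivAt_id u).const_sub 1) h1u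
    refine (this.congr_deriv ?_).hasDerivWithinAt
    field_simp
    ring
  have hinj : InjOn (fun u : ℝ => u / (1 - u)) (Ioo 0 1) := by
    intro u hu v hv h
    have h1u : (1:ℝ) - u ≠ 0 := by have := hu.2; intro hh; linarith [(by linarith : u = 1)]
    have h1v : (1:ℝ) - v ≠ 0 := by have := hv.2; intro hh; linarith [(by linarith : v = 1)]
    field_simp at h
    nlinarith
  have hcv := integral_image_eq_integral_abs_deriv_smul measurableSet_Ioo hderiv hinj (qG α 1)
  rw [image_mobius] at hcv
  rw [hcv, ← beta_real hα0 hα1]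
  apply setIntegral_congr_fun measurableSet_Ioo
  intro u hu
  have hu0 : (0:ℝ) < u := hu.1
  have hu1 : (0:ℝ) < 1 - u := by linarith [hu.2]
  have hden : 1 + u / (1 - u) * 1 = (1 - u)⁻¹ := by field_simp; ring
  dsimp only
  rw [smul_eq_mul, abs_of_pos (by positivity)]
  unfold qG
  rw [hden, inv_inv, Real.div_rpow hu0.le hu1.le]
  rw [show (-α : ℝ) = -(α - 1) + (-2 + 1) by ring, Real.rpow_add hu1, Real.rpow_add hu1,
    Real.rpow_neg hu1.le (α - 1), Real.rpow_one, show ((-2:ℝ)) = ((-2:ℤ):ℝ) by norm_num,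
    Real.rpow_intCast]
  have h2 : ((1 - u) ^ (-2 : ℤ)) = ((1 - u) ^ 2)⁻¹ := by
    rw [zpow_neg, zpow_two]; ring_nf
  rw [h2]
  field_simp

lemma intG_eq (hlam : 0 < lam) (hα0 : 0 < α) (hα1 : α < 1) :
    (∫ t in Ioi (0:ℝ), qG α lam t) = lam ^ (-α) * (π / Real.sin (π * α)) := by
  have hscale := integral_comp_mul_left_Ioi (qG α 1) 0 hlam
  rw [mul_zero] at hscale
  have hlhs : (∫ x in Ioi (0:ℝ), qG α 1 (lam * x)) =
      lam ^ (α - 1) * ∫ x in Ioi (0:ℝ), qG α lam x := by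
    rw [← integral_const_mul]
    apply setIntegral_congr_fun measurableSet_Ioi
    intro x hx
    have hx0 : (0:ℝ) < x := hx
    unfold qG
    dsimp only
    rw [Real.mul_rpow hlam.le hx0.le, mul_one, mul_comm lam x]
    ring
  rw [hlhs, smul_eq_mul, J_eq hα0 hα1] at hscale
  have hne : lam ^ (α - 1) ≠ 0 := by positivity
  have key : (lam ^ (α - 1))⁻¹ * lam⁻¹ = lam ^ (-α) := by
    rw [← Real.rpow_neg hlam.le, ← Real.rpow_neg_one lam, ← Real.rpow_add hlam]
    ring_nf
  calc (∫ t in Ioi (0:ℝ), qG α lam t)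
      = (lam ^ (α - 1))⁻¹ * (lam ^ (α - 1) * ∫ t in Ioi (0:ℝ), qG α lam t) := by
        rw [← mul_assoc, inv_mul_cancel₀ hne, one_mul]
    _ = (lam ^ (α - 1))⁻¹ * (lam⁻¹ * (π / Real.sin (π * α))) := by rw [hscale]
    _ = lam ^ (-α) * (π / Real.sin (π * α)) := by rw [← mul_assoc, key]

lemma integral_qF (hlam : 0 < lam) (hα0 : 0 < α) (hα1 : α < 1) :
    (∫ s : ℝ, qF α lam s) = lam ^ (-α) * (π / (2 * Real.sin (π * α))) := by
  have h := cov_exp hlam hα0 (lam := lam)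
  rw [intG_eq hlam hα0 hα1, integral_const_mul] at h
  have : (∫ s : ℝ, qF α lam s) = (lam ^ (-α) * (π / Real.sin (π * α))) / 2 := by
    linarith
  rw [this]
  ring

lemma continuous_qD (hlam : 0 < lam) : Continuous (qD α lam) := by
  unfold qD
  apply Continuous.sub
  · exact continuous_const.mul (continuous_qF hlam)
  · apply Continuous.div
    · exact ((Real.continuous_exp.comp (continuous_const.mul continuous_id)).mul
        ((continuous_const.mul (Real.continuous_exp.comp (continuous_const.mul continuous_id))).mul
          continuous_const))
    · fun_prop
    · intro s
      exact pow_ne_zero 2 (h_pos hlam s).ne'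

lemma rect_err (hlam : 0 < lam) (hα0 : 0 < α) (hα1 : α < 1) {a η : ℝ} (hη : 0 ≤ η) :
    |η * qF α lam a - ∫ x in a..(a + η), qF α lam x| ≤
      η * ∫ x in a..(a + η), 4 * qF α lam x := by
  have hab : a ≤ a + η := by linarith
  have hC : Continuous (qF α lam) := continuous_qF hlam
  have hD : Continuous (qD α lam) := continuous_qD hlam
  set C := ∫ x in a..(a + η), 4 * qF α lam x with hCdef
  have hptw : ∀ x ∈ Icc a (a + η), |qF α lam a - qF α lam x| ≤ C := by
    intro x hx
    have hftc : (∫ t in a..x, qD α lam t) = qF α lam x - qF α lam a :=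
      intervalIntegral.integral_eq_sub_of_hasDerivAt
        (fun t _ => hasDerivAt_qF hlam t) ((hD.intervalIntegrable a x))
    rw [abs_sub_comm, ← hftc]
    calc |∫ t in a..x, qD α lam t| ≤ ∫ t in a..x, |qD α lam t| :=
          intervalIntegral.abs_integral_le_integral_abs hx.1
      _ ≤ ∫ t in a..x, 4 * qF α lam t := by
          apply intervalIntegral.integral_mono_on hx.1
            (hD.abs.intervalIntegrable a x) (((continuous_const.mul hC)).intervalIntegrable a x)
          exact fun t _ => abs_qD_le hlam hα0 hα1 t
      _ ≤ C := by
          apply intervalIntegral.integral_mono_interval le_rfl hx.1 hx.2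
          · filter_upwards with t
            have := (qF_pos hlam t (α := α)).le
            positivity
          · exact (continuous_const.mul hC).intervalIntegrable a (a + η)
  have h1 : η * qF α lam a = ∫ _x in a..(a + η), qF α lam a := by
    rw [intervalIntegral.integral_const, smul_eq_mul]
    ring_nf
  rw [h1, ← intervalIntegral.integral_sub (intervalIntegrable_const) (hC.intervalIntegrable a _)]
  calc |∫ x in a..(a + η), (qF α lam a - qF α lam x)|
      ≤ ∫ x in a..(a + η), |qF α lam a - qF α lam x| :=
        intervalIntegral.abs_integral_le_integral_abs hab
    _ ≤ ∫ _x in a..(a + η), C := by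
        apply intervalIntegral.integral_mono_on hab
          ((continuous_const.sub hC).abs.intervalIntegrable a _) intervalIntegrable_const
        exact hptw
    _ = η * C := by rw [intervalIntegral.integral_const, smul_eq_mul]; ring_nf

lemma sum_reindex (F : ℝ → ℝ) (M : ℕ) (η : ℝ) :
    ∑ m ∈ Finset.Icc (-(M : ℤ)) M, F ((m : ℝ) * η) =
      ∑ k ∈ Finset.range (2 * M + 1), F (((k : ℝ) - M) * η) := by
  refine Finset.sum_nbij' (fun m => (m + M).toNat) (fun k => (k : ℤ) - M) ?_ ?_ ?_ ?_ ?_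
  · intro m hm
    simp only [Finset.mem_Icc] at hm
    simp only [Finset.mem_range]
    omega
  · intro k hk
    simp only [Finset.mem_range] at hk
    simp only [Finset.mem_Icc]
    omega
  · intro m hm
    simp only [Finset.mem_Icc] at hm
    omega
  · intro k hk
    simp only [Finset.mem_range] at hk
    omega
  · intro m hm
    simp only [Finset.mem_Icc] at hm
    have h0 : ((m + (M:ℤ)).toNat : ℤ) = m + M := Int.toNat_of_nonneg (by omega)
    have h1 : (((m + (M:ℤ)).toNat : ℕ) : ℝ) = (m : ℝ) + M := by
      have := congrArg (fun z : ℤ => (z : ℝ)) h0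
      push_cast at this
      exact this
    rw [h1]
    ring_nf

lemma riemann_est (hlam : 0 < lam) (hα0 : 0 < α) (hα1 : α < 1) (M : ℕ) (hM : 1 ≤ M) :
    |((M : ℝ) ^ (-(1 / 2 : ℝ))) *
        (∑ k ∈ Finset.range (2 * M + 1),
          qF α lam (((k : ℝ) - M) * (M : ℝ) ^ (-(1 / 2 : ℝ)))) -
      ∫ x in (-(M : ℝ) * (M : ℝ) ^ (-(1 / 2 : ℝ)))..(((M : ℝ) + 1) * (M : ℝ) ^ (-(1 / 2 : ℝ))),
        qF α lam x| ≤
      4 * (M : ℝ) ^ (-(1 / 2 : ℝ)) * ∫ s : ℝ, qF α lam s := by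
  have hMpos : (0:ℝ) < (M:ℝ) := by exact_mod_cast hM
  set η : ℝ := (M : ℝ) ^ (-(1 / 2 : ℝ)) with hηdef
  have hη : 0 < η := Real.rpow_pos_of_pos hMpos _
  set a : ℕ → ℝ := fun k => ((k : ℝ) - M) * η with hadef
  have hstep : ∀ k : ℕ, a (k + 1) = a k + η := by
    intro k; simp only [hadef]; push_cast; ring
  have hC : Continuous (qF α lam) := continuous_qF hlam
  have hint : ∀ k : ℕ, IntervalIntegrable (qF α lam) volume (a k) (a (k + 1)) := by
    intro k
    exact hC.intervalIntegrable _ _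
  have hsum1 := intervalIntegral.sum_integral_adjacent_intervals
    (a := a) (n := 2 * M + 1) (f := qF α lam) (fun k _ => hint k)
  have hint2 : ∀ k : ℕ, IntervalIntegrable (fun x => 4 * qF α lam x) volume (a k) (a (k + 1)) := by
    intro k
    exact (continuous_const.mul hC).intervalIntegrable _ _
  have hsum2 := intervalIntegral.sum_integral_adjacent_intervals
    (a := a) (n := 2 * M + 1) (f := fun x => 4 * qF α lam x)
    (fun k _ => hint2 k)
  have ha0 : a 0 = -(M : ℝ) * η := by simp [hadef]
  have haN : a (2 * M + 1) = ((M : ℝ) + 1) * η := by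
    simp only [hadef]; push_cast; ring
  have hmono : a 0 ≤ a (2 * M + 1) := by
    rw [ha0, haN]; nlinarith
  have hI : Integrable (qF α lam) := qF_integrable hlam hα0 hα1
  have key : |(∑ k ∈ Finset.range (2 * M + 1), η * qF α lam (a k)) -
      ∫ x in (a 0)..(a (2 * M + 1)), qF α lam x| ≤
      η * ∫ x in (a 0)..(a (2 * M + 1)), 4 * qF α lam x := by
    rw [← hsum1, ← Finset.sum_sub_distrib]
    calc |∑ k ∈ Finset.range (2 * M + 1),
          (η * qF α lam (a k) - ∫ x in (a k)..(a (k + 1)), qF α lam x)|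
        ≤ ∑ k ∈ Finset.range (2 * M + 1),
          |η * qF α lam (a k) - ∫ x in (a k)..(a (k + 1)), qF α lam x| :=
          Finset.abs_sum_le_sum_abs _ _
      _ ≤ ∑ k ∈ Finset.range (2 * M + 1),
          η * ∫ x in (a k)..(a (k + 1)), 4 * qF α lam x := by
          apply Finset.sum_le_sum
          intro k _
          have := rect_err hlam hα0 hα1 (a := a k) (η := η) hη.le
          rwa [← hstep k] at this
      _ = η * ∫ x in (a 0)..(a (2 * M + 1)), 4 * qF α lam x := by
          rw [← hsum2, Finset.mul_sum]
  have hIoc : (∫ x in (a 0)..(a (2 * M + 1)), qF α lam x) ≤ ∫ s : ℝ, qF α lam s := by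
    rw [intervalIntegral.integral_of_le hmono]
    exact setIntegral_le_integral hI
      (Filter.Eventually.of_forall fun s => (qF_pos hlam s).le)
  have h4 : (∫ x in (a 0)..(a (2 * M + 1)), (4:ℝ) * qF α lam x) =
      4 * ∫ x in (a 0)..(a (2 * M + 1)), qF α lam x := by
    rw [intervalIntegral.integral_const_mul]
  have final := key
  rw [h4] at final
  have hconv : ((M : ℝ) ^ (-(1 / 2 : ℝ))) *
      (∑ k ∈ Finset.range (2 * M + 1), qF α lam (((k : ℝ) - M) * (M : ℝ) ^ (-(1 / 2 : ℝ)))) =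
      ∑ k ∈ Finset.range (2 * M + 1), η * qF α lam (a k) := by
    rw [Finset.mul_sum]
  rw [hconv]
  rw [← ha0, ← haN] at *
  refine final.trans ?_
  have : η * (4 * ∫ x in (a 0)..(a (2 * M + 1)), qF α lam x) ≤ η * (4 * ∫ s : ℝ, qF α lam s) := by
    apply mul_le_mul_of_nonneg_left _ hη.le
    linarith
  refine this.trans (le_of_eq ?_)
  ring

lemma sincQuad_eq (α lam : ℝ) (M : ℕ) :
    sincQuad α lam M = 2 * Real.sin (π * α) / π *
      (((M : ℝ) ^ (-(1 / 2 : ℝ))) * ∑ k ∈ Finset.range (2 * M + 1),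
        qF α lam (((k : ℝ) - M) * (M : ℝ) ^ (-(1 / 2 : ℝ)))) := by
  unfold sincQuad
  rw [← sum_reindex (qF α lam) M ((M : ℝ) ^ (-(1 / 2 : ℝ)))]
  unfold qF
  ring

theorem sinc_quadrature_positive_and_convergent (lam δ α : ℝ) (hδ : 0 < δ)
    (hlam : δ ≤ lam) (hα0 : 0 < α) (hα1 : α < 1) :
    (∀ M : ℕ, 0 < M → 0 < sincQuad α lam M) ∧
      Tendsto (fun M : ℕ => |sincQuad α lam M - lam ^ (-α)|) atTop (nhds 0) := by
  have hlam0 : 0 < lam := lt_of_lt_of_le hδ hlam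
  have hsin : 0 < Real.sin (π * α) :=
    Real.sin_pos_of_pos_of_lt_pi (by positivity) (by nlinarith [Real.pi_pos])
  have hCpos : 0 < 2 * Real.sin (π * α) / π := by
    have := Real.pi_pos
    positivity
  set I : ℝ := ∫ s : ℝ, qF α lam s with hIdef
  have hInonneg : 0 ≤ I :=
    integral_nonneg fun s => (qF_pos hlam0 s).le
  have hlamα : lam ^ (-α) = 2 * Real.sin (π * α) / π * I := by
    rw [hIdef, integral_qF hlam0 hα0 hα1]
    field_simp [hsin.ne']
    ring_nf
    rw [mul_inv_cancel₀ (by rw [mul_comm]; exact hsin.ne')]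
  constructor
  · intro M hM
    have hMpos : (0 : ℝ) < (M : ℝ) := by exact_mod_cast hM
    have hη : 0 < (M : ℝ) ^ (-(1 / 2 : ℝ)) := Real.rpow_pos_of_pos hMpos _
    rw [sincQuad_eq]
    have hsum : 0 < ∑ k ∈ Finset.range (2 * M + 1),
        qF α lam (((k : ℝ) - M) * (M : ℝ) ^ (-(1 / 2 : ℝ))) := by
      apply Finset.sum_pos (fun k _ => qF_pos hlam0 _)
      exact ⟨0, Finset.mem_range.mpr (by omega)⟩
    positivity
  · -- convergence
    have hη0 : Tendsto (fun M : ℕ => (M : ℝ) ^ (-(1 / 2 : ℝ))) atTop (nhds 0) :=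
      (tendsto_rpow_neg_atTop (by norm_num : (0:ℝ) < 1 / 2)).comp
        tendsto_natCast_atTop_atTop
    have hsqrt : Tendsto (fun M : ℕ => (M : ℝ) * (M : ℝ) ^ (-(1 / 2 : ℝ))) atTop atTop := by
      apply Tendsto.congr' (f₁ := fun M : ℕ => (M : ℝ) ^ ((1 / 2 : ℝ)))
      · filter_upwards [eventually_ge_atTop 1] with M hM
        have hMpos : (0 : ℝ) < (M : ℝ) := by exact_mod_cast hM
        have h2 : (M : ℝ) * (M : ℝ) ^ (-(1 / 2 : ℝ)) = (M : ℝ) ^ ((1:ℝ) + -(1 / 2 : ℝ)) := by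
          rw [Real.rpow_add hMpos, Real.rpow_one]
        rw [h2]
        norm_num
      · exact (tendsto_rpow_atTop (by norm_num : (0:ℝ) < 1 / 2)).comp
          tendsto_natCast_atTop_atTop
    have hbl : Tendsto (fun M : ℕ => -(M : ℝ) * (M : ℝ) ^ (-(1 / 2 : ℝ))) atTop atBot := by
      have := tendsto_neg_atTop_atBot.comp hsqrt
      refine this.congr fun M => ?_
      simp [neg_mul]
    have hbu : Tendsto (fun M : ℕ => ((M : ℝ) + 1) * (M : ℝ) ^ (-(1 / 2 : ℝ))) atTop atTop := by
      apply tendsto_atTop_mono _ hsqrt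
      intro M
      have hη : (0:ℝ) ≤ (M : ℝ) ^ (-(1 / 2 : ℝ)) := Real.rpow_nonneg (Nat.cast_nonneg M) _
      nlinarith
    have hIconv : Tendsto (fun M : ℕ =>
        ∫ x in (-(M : ℝ) * (M : ℝ) ^ (-(1 / 2 : ℝ)))..(((M : ℝ) + 1) * (M : ℝ) ^ (-(1 / 2 : ℝ))),
          qF α lam x) atTop (nhds I) :=
      intervalIntegral_tendsto_integral (qF_integrable hlam0 hα0 hα1) hbl hbu
    have htail : Tendsto (fun M : ℕ =>
        |(∫ x in (-(M : ℝ) * (M : ℝ) ^ (-(1 / 2 : ℝ)))..(((M : ℝ) + 1) *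
          (M : ℝ) ^ (-(1 / 2 : ℝ))), qF α lam x) - I|) atTop (nhds 0) := by
      have := (hIconv.sub (tendsto_const_nhds (x := I))).abs
      simpa using this
    have hB : Tendsto (fun M : ℕ => 2 * Real.sin (π * α) / π *
        (4 * (M : ℝ) ^ (-(1 / 2 : ℝ)) * I +
          |(∫ x in (-(M : ℝ) * (M : ℝ) ^ (-(1 / 2 : ℝ)))..(((M : ℝ) + 1) *
            (M : ℝ) ^ (-(1 / 2 : ℝ))), qF α lam x) - I|)) atTop (nhds 0) := by
      have h1 : Tendsto (fun M : ℕ => 4 * (M : ℝ) ^ (-(1 / 2 : ℝ)) * I) atTop (nhds 0) := by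
        have := (hη0.const_mul 4).mul_const I
        simpa using this
      have := ((h1.add htail).const_mul (2 * Real.sin (π * α) / π))
      simpa using this
    apply tendsto_of_tendsto_of_tendsto_of_le_of_le' tendsto_const_nhds hB
    · exact Eventually.of_forall fun M => abs_nonneg _
    · filter_upwards [eventually_ge_atTop 1] with M hM
      have hest := riemann_est hlam0 hα0 hα1 M hM
      rw [sincQuad_eq, hlamα]
      rw [← mul_sub, abs_mul, abs_of_pos hCpos]
      apply mul_le_mul_of_nonneg_left _ hCpos.le
      calc |(M : ℝ) ^ (-(1 / 2 : ℝ)) * ∑ k ∈ Finset.range (2 * M + 1),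
            qF α lam (((k : ℝ) - M) * (M : ℝ) ^ (-(1 / 2 : ℝ))) - I|
          ≤ |(M : ℝ) ^ (-(1 / 2 : ℝ)) * (∑ k ∈ Finset.range (2 * M + 1),
              qF α lam (((k : ℝ) - M) * (M : ℝ) ^ (-(1 / 2 : ℝ)))) -
              (∫ x in (-(M : ℝ) * (M : ℝ) ^ (-(1 / 2 : ℝ)))..(((M : ℝ) + 1) *
                (M : ℝ) ^ (-(1 / 2 : ℝ))), qF α lam x)| +
            |(∫ x in (-(M : ℝ) * (M : ℝ) ^ (-(1 / 2 : ℝ)))..(((M : ℝ) + 1) *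
              (M : ℝ) ^ (-(1 / 2 : ℝ))), qF α lam x) - I| := by
            apply abs_sub_le
        _ ≤ 4 * (M : ℝ) ^ (-(1 / 2 : ℝ)) * I +
            |(∫ x in (-(M : ℝ) * (M : ℝ) ^ (-(1 / 2 : ℝ)))..(((M : ℝ) + 1) *
              (M : ℝ) ^ (-(1 / 2 : ℝ))), qF α lam x) - I| := by
            have := hest
            linarith
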